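/- Assume M > 0, Q ≠ 0, D := 9M² − 8Q² > 0 and max(0, 6(M − √D)/(3M − √D)³) < Λ < 6(M + √D)/(3M + √D)³. Set r_{1−} := (3M − √D)/2 and r_{2−} := (3M + √D)/2. Then μ has exactly three positive roots, all simple (μ′ is nonzero at each); denoting them r_i < r₋ < r₊, they satisfy 0 < r_i < r_{1−} < r₋ < r_{2−} < r₊. Moreover μ > 0 on (0, r_i) ∪ (r₋, r₊) and μ < 0 on (r_i, r₋) ∪ (r₊, ∞). -/

import Mathlib

/-- The Reissner–Nordström–de Sitter metric coefficient
`μ(r) = 1 − 2M/r − Λr²/3 + Q²/r²`. -/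
noncomputable def mu (Λ M Q r : ℝ) : ℝ := 1 - 2 * M / r - Λ * r ^ 2 / 3 + Q ^ 2 / r ^ 2

noncomputable def gfun (Λ M Q r : ℝ) : ℝ := (r^2 - 2*M*r + Q^2)/r^4 - Λ/3

lemma mu_eq_gfun (Λ M Q r : ℝ) (hr : r ≠ 0) : mu Λ M Q r = r^2 * gfun Λ M Q r := by
  unfold mu gfun; field_simp; ring

lemma mu_eq_div (Λ M Q r : ℝ) (hr : r ≠ 0) :
    mu Λ M Q r = (3*r^2 - 6*M*r - Λ*r^4 + 3*Q^2)/(3*r^2) := by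
  unfold mu; field_simp; ring

lemma gfun_hasDerivAt (Λ M Q r : ℝ) (hr : r ≠ 0) :
    HasDerivAt (gfun Λ M Q) ((-2*r^2 + 6*M*r - 4*Q^2)/r^5) r := by
  unfold gfun
  have hn : HasDerivAt (fun x : ℝ => x^2 - 2*M*x + Q^2) (2*r - 2*M) r := by
    have h := ((hasDerivAt_pow 2 r).sub ((hasDerivAt_id r).const_mul (2*M))).add_const (Q^2)
    refine h.congr_deriv ?_
    simp
  have hd : HasDerivAt (fun x : ℝ => x^4) ((4:ℝ)*r^3) r := by
    simpa using hasDerivAt_pow 4 r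
  have h := (hn.div hd (pow_ne_zero 4 hr)).sub_const (Λ/3)
  refine h.congr_deriv ?_
  field_simp
  ring

lemma mu_hasDerivAt (Λ M Q r : ℝ) (hr : r ≠ 0) :
    HasDerivAt (mu Λ M Q) (2*M/r^2 - 2*Λ*r/3 - 2*Q^2/r^3) r := by
  have hn : HasDerivAt (fun x : ℝ => 3*x^2 - 6*M*x - Λ*x^4 + 3*Q^2)
      (6*r - 6*M - 4*Λ*r^3) r := by
    have h := ((((hasDerivAt_pow 2 r).const_mul 3).sub
        ((hasDerivAt_id r).const_mul (6*M))).sub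
        ((hasDerivAt_pow 4 r).const_mul Λ)).add_const (3*Q^2)
    refine h.congr_deriv ?_
    simp; ring
  have hd : HasDerivAt (fun x : ℝ => 3*x^2) (6*r) r := by
    have h := (hasDerivAt_pow 2 r).const_mul (3:ℝ)
    refine h.congr_deriv ?_
    simp; ring
  have h := hn.div hd (by positivity)
  have hne : mu Λ M Q =ᶠ[nhds r] fun x => (3*x^2 - 6*M*x - Λ*x^4 + 3*Q^2)/(3*x^2) := by
    filter_upwards [eventually_ne_nhds hr] with x hx using mu_eq_div Λ M Q x hx
  have h2 := h.congr_of_eventuallyEq hne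
  refine h2.congr_deriv ?_
  field_simp
  ring

set_option maxHeartbeats 2000000 in
/-- Root structure of `μ` in the non-degenerate charged parameter range: `μ` has exactly
three positive roots `ri < rm < rp`, all simple, interlaced with
`r_{1−} = (3M − √D)/2` and `r_{2−} = (3M + √D)/2`, and the sign of `μ` alternates. -/
theorem rnds_three_roots (Λ M Q : ℝ) (hM : 0 < M) (hQ : Q ≠ 0)
    (hD : 0 < 9 * M ^ 2 - 8 * Q ^ 2)
    (hΛ₁ : max 0 (6 * (M - Real.sqrt (9 * M ^ 2 - 8 * Q ^ 2)) /
        (3 * M - Real.sqrt (9 * M ^ 2 - 8 * Q ^ 2)) ^ 3) < Λ)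
    (hΛ₂ : Λ < 6 * (M + Real.sqrt (9 * M ^ 2 - 8 * Q ^ 2)) /
        (3 * M + Real.sqrt (9 * M ^ 2 - 8 * Q ^ 2)) ^ 3) :
    ∃ ri rm rp : ℝ,
      0 < ri ∧
      ri < (3 * M - Real.sqrt (9 * M ^ 2 - 8 * Q ^ 2)) / 2 ∧
      (3 * M - Real.sqrt (9 * M ^ 2 - 8 * Q ^ 2)) / 2 < rm ∧
      rm < (3 * M + Real.sqrt (9 * M ^ 2 - 8 * Q ^ 2)) / 2 ∧
      (3 * M + Real.sqrt (9 * M ^ 2 - 8 * Q ^ 2)) / 2 < rp ∧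
      mu Λ M Q ri = 0 ∧ mu Λ M Q rm = 0 ∧ mu Λ M Q rp = 0 ∧
      deriv (mu Λ M Q) ri ≠ 0 ∧ deriv (mu Λ M Q) rm ≠ 0 ∧ deriv (mu Λ M Q) rp ≠ 0 ∧
      (∀ r : ℝ, 0 < r → mu Λ M Q r = 0 → r = ri ∨ r = rm ∨ r = rp) ∧
      (∀ r : ℝ, 0 < r ∧ r < ri → 0 < mu Λ M Q r) ∧
      (∀ r : ℝ, ri < r ∧ r < rm → mu Λ M Q r < 0) ∧
      (∀ r : ℝ, rm < r ∧ r < rp → 0 < mu Λ M Q r) ∧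
      (∀ r : ℝ, rp < r → mu Λ M Q r < 0) := by
  have hQ2 : 0 < Q ^ 2 := by positivity
  set s := Real.sqrt (9 * M ^ 2 - 8 * Q ^ 2) with hs_def
  have hspos : 0 < s := Real.sqrt_pos.mpr hD
  have hs2 : s ^ 2 = 9 * M ^ 2 - 8 * Q ^ 2 := Real.sq_sqrt hD.le
  have hs3M : s < 3 * M := by nlinarith only [hs2, hQ2, hspos, hM]
  set r₁ := (3 * M - s) / 2 with hr₁_def
  set r₂ := (3 * M + s) / 2 with hr₂_def
  have hr₁0 : 0 < r₁ := by rw [hr₁_def]; linarith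
  have hr₂0 : 0 < r₂ := by rw [hr₂_def]; linarith
  have h12 : r₁ < r₂ := by rw [hr₁_def, hr₂_def]; linarith
  have hsum : r₁ + r₂ = 3 * M := by rw [hr₁_def, hr₂_def]; ring
  have hprod : r₁ * r₂ = 2 * Q ^ 2 := by
    rw [hr₁_def, hr₂_def]; linear_combination (-1/4 : ℝ) * hs2
  have hq1 : r₁ ^ 2 - 3 * M * r₁ + 2 * Q ^ 2 = 0 := by
    rw [hr₁_def]; linear_combination (1/4 : ℝ) * hs2
  have hq2 : r₂ ^ 2 - 3 * M * r₂ + 2 * Q ^ 2 = 0 := by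
    rw [hr₂_def]; linear_combination (1/4 : ℝ) * hs2
  have hΛ0 : 0 < Λ := lt_of_le_of_lt (le_max_left _ _) hΛ₁
  clear_value s
  have hquad : ∀ x : ℝ, x ^ 2 - 3 * M * x + 2 * Q ^ 2 = (x - r₁) * (x - r₂) := by
    intro x; linear_combination x * hsum - hprod
  clear_value r₁ r₂
  -- mu at r₁ is negative
  have hmur₁ : mu Λ M Q r₁ < 0 := by
    have h := lt_of_le_of_lt (le_max_right _ _) hΛ₁
    have hc : (0:ℝ) < (3 * M - s) ^ 3 := by
      have : (0:ℝ) < 3 * M - s := by linarith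
      positivity
    rw [div_lt_iff₀ hc] at h
    have e1 : 3 * M - s = 2 * r₁ := by rw [hr₁_def]; ring
    have e2 : M - s = 2 * r₁ - 2 * M := by rw [hr₁_def]; ring
    rw [e1, e2] at h
    have hF1 : 3 * r₁ ^ 2 - 6 * M * r₁ - Λ * r₁ ^ 4 + 3 * Q ^ 2 < 0 := by
      nlinarith only [mul_lt_mul_of_pos_right h hr₁0, hq1]
    rw [mu_eq_div Λ M Q r₁ (ne_of_gt hr₁0)]
    exact div_neg_of_neg_of_pos hF1 (by positivity)
  -- mu at r₂ is positive
  have hmur₂ : 0 < mu Λ M Q r₂ := by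
    have hc : (0:ℝ) < (3 * M + s) ^ 3 := by positivity
    rw [lt_div_iff₀ hc] at hΛ₂
    have e1 : 3 * M + s = 2 * r₂ := by rw [hr₂_def]; ring
    have e2 : M + s = 2 * r₂ - 2 * M := by rw [hr₂_def]; ring
    rw [e1, e2] at hΛ₂
    have hF2 : 0 < 3 * r₂ ^ 2 - 6 * M * r₂ - Λ * r₂ ^ 4 + 3 * Q ^ 2 := by
      nlinarith only [mul_lt_mul_of_pos_right hΛ₂ hr₂0, hq2]
    rw [mu_eq_div Λ M Q r₂ (ne_of_gt hr₂0)]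
    exact div_pos hF2 (by positivity)
  -- small sample point a with mu > 0
  have haux : (0:ℝ) < 6 * M + Λ + 1 := by linarith
  set a := min (r₁ / 2) (min 1 (3 * Q ^ 2 / (6 * M + Λ + 1))) with ha_def
  have ha0 : 0 < a := by
    apply lt_min (by linarith)
    exact lt_min one_pos (by positivity)
  have har₁ : a < r₁ := lt_of_le_of_lt (min_le_left _ _) (by linarith)
  have ha1 : a ≤ 1 := le_trans (min_le_right _ _) (min_le_left _ _)
  have haQ : (6 * M + Λ + 1) * a ≤ 3 * Q ^ 2 := by
    have h : a ≤ 3 * Q ^ 2 / (6 * M + Λ + 1) := by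
      rw [ha_def]; exact le_trans (min_le_right _ _) (min_le_right _ _)
    rw [le_div_iff₀ haux] at h
    linarith [h]
  clear_value a
  have ha4 : a ^ 4 ≤ a := by
    calc a ^ 4 ≤ a ^ 1 := pow_le_pow_of_le_one ha0.le ha1 (by norm_num)
    _ = a := pow_one a
  have hmua : 0 < mu Λ M Q a := by
    have hFa : 0 < 3 * a ^ 2 - 6 * M * a - Λ * a ^ 4 + 3 * Q ^ 2 := by
      nlinarith only [mul_le_mul_of_nonneg_left ha4 hΛ0.le, haQ, sq_nonneg a, ha0]
    rw [mu_eq_div Λ M Q a (ne_of_gt ha0)]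
    exact div_pos hFa (by positivity)
  -- large sample point T with mu < 0
  set T := max (r₂ + 1) (max 1 ((3 + 3 * Q ^ 2) / Λ)) with hT_def
  have hTr₂ : r₂ < T := lt_of_lt_of_le (by linarith) (le_max_left _ _)
  have hT1 : (1:ℝ) ≤ T := le_trans (le_max_left _ _) (le_max_right _ _)
  have hT0 : (0:ℝ) < T := by linarith
  have hTL : 3 + 3 * Q ^ 2 ≤ Λ * T := by
    have h : (3 + 3 * Q ^ 2) / Λ ≤ T := by
      rw [hT_def]; exact le_trans (le_max_right _ _) (le_max_right _ _)
    rw [div_le_iff₀ hΛ0] at h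
    linarith [h]
  clear_value T
  have hmuT : mu Λ M Q T < 0 := by
    have h1 : 3 + 3 * Q ^ 2 ≤ Λ * T ^ 2 := by
      nlinarith only [hTL, mul_nonneg (mul_nonneg hΛ0.le hT0.le) (sub_nonneg.mpr hT1)]
    have h2 : (3 + 3 * Q ^ 2) * T ^ 2 ≤ Λ * T ^ 4 := by
      nlinarith only [mul_le_mul_of_nonneg_right h1 (sq_nonneg T)]
    have hT2 : 1 ≤ T ^ 2 := by nlinarith only [hT1, hT0]
    have hFT : 3 * T ^ 2 - 6 * M * T - Λ * T ^ 4 + 3 * Q ^ 2 < 0 := by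
      nlinarith only [h2, mul_pos hM hT0, mul_nonneg hQ2.le (sub_nonneg.mpr hT2)]
    rw [mu_eq_div Λ M Q T (ne_of_gt hT0)]
    exact div_neg_of_neg_of_pos hFT (by positivity)
  -- transfer signs to gfun
  have gval : ∀ x : ℝ, 0 < x → mu Λ M Q x = x ^ 2 * gfun Λ M Q x :=
    fun x hx => mu_eq_gfun Λ M Q x (ne_of_gt hx)
  have hga : 0 < gfun Λ M Q a := by nlinarith only [gval a ha0, hmua, pow_pos ha0 2]
  have hgr₁ : gfun Λ M Q r₁ < 0 := by nlinarith only [gval r₁ hr₁0, hmur₁, pow_pos hr₁0 2]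
  have hgr₂ : 0 < gfun Λ M Q r₂ := by nlinarith only [gval r₂ hr₂0, hmur₂, pow_pos hr₂0 2]
  have hgT : gfun Λ M Q T < 0 := by nlinarith only [gval T hT0, hmuT, pow_pos hT0 2]
  -- continuity and derivative of g
  have hgc : ∀ x : ℝ, x ≠ 0 → ContinuousAt (gfun Λ M Q) x :=
    fun x hx => (gfun_hasDerivAt Λ M Q x hx).continuousAt
  have hgd : ∀ x : ℝ, x ≠ 0 → deriv (gfun Λ M Q) x = (-2*x^2 + 6*M*x - 4*Q^2)/x^5 :=
    fun x hx => (gfun_hasDerivAt Λ M Q x hx).deriv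
  -- monotonicity
  have hanti1 : StrictAntiOn (gfun Λ M Q) (Set.Ioc 0 r₁) := by
    apply strictAntiOn_of_deriv_neg (convex_Ioc 0 r₁)
    · exact fun x hx => (hgc x (ne_of_gt hx.1)).continuousWithinAt
    · intro x hx
      rw [interior_Ioc] at hx
      rw [hgd x (ne_of_gt hx.1)]
      apply div_neg_of_neg_of_pos
      · nlinarith only [hquad x, mul_pos (show (0:ℝ) < r₁ - x by linarith [hx.2])
          (show (0:ℝ) < r₂ - x by linarith [hx.2, h12])]
      · exact pow_pos hx.1 5
  have hmono : StrictMonoOn (gfun Λ M Q) (Set.Icc r₁ r₂) := by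
    apply strictMonoOn_of_deriv_pos (convex_Icc r₁ r₂)
    · exact fun x hx => (hgc x (ne_of_gt (lt_of_lt_of_le hr₁0 hx.1))).continuousWithinAt
    · intro x hx
      rw [interior_Icc] at hx
      have hx0 : 0 < x := lt_trans hr₁0 hx.1
      rw [hgd x (ne_of_gt hx0)]
      apply div_pos
      · nlinarith only [hquad x, mul_pos (show (0:ℝ) < x - r₁ by linarith [hx.1])
          (show (0:ℝ) < r₂ - x by linarith [hx.2])]
      · exact pow_pos hx0 5
  have hanti2 : StrictAntiOn (gfun Λ M Q) (Set.Ici r₂) := by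
    apply strictAntiOn_of_deriv_neg (convex_Ici r₂)
    · exact fun x hx => (hgc x (ne_of_gt (lt_of_lt_of_le hr₂0 hx))).continuousWithinAt
    · intro x hx
      rw [interior_Ici] at hx
      have hx' : r₂ < x := hx
      have hx0 : 0 < x := lt_trans hr₂0 hx'
      rw [hgd x (ne_of_gt hx0)]
      apply div_neg_of_neg_of_pos
      · nlinarith only [hquad x, mul_pos (show (0:ℝ) < x - r₁ by linarith [hx', h12])
          (show (0:ℝ) < x - r₂ by linarith [hx'])]
      · exact pow_pos hx0 5
  -- roots by IVT
  obtain ⟨ri, hri_mem, hgri⟩ : ∃ x ∈ Set.Icc a r₁, gfun Λ M Q x = 0 := by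
    have hsub := intermediate_value_Icc' har₁.le
      (fun x hx => (hgc x (ne_of_gt (lt_of_lt_of_le ha0 hx.1))).continuousWithinAt)
    obtain ⟨x, hx, hx0⟩ := hsub ⟨hgr₁.le, hga.le⟩
    exact ⟨x, hx, hx0⟩
  have hri0 : 0 < ri := lt_of_lt_of_le ha0 hri_mem.1
  have hrir₁ : ri < r₁ :=
    lt_of_le_of_ne hri_mem.2 (fun h => absurd (h ▸ hgri) (ne_of_lt hgr₁))
  obtain ⟨rm, hrm_mem, hgrm⟩ : ∃ x ∈ Set.Icc r₁ r₂, gfun Λ M Q x = 0 := by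
    have hsub := intermediate_value_Icc h12.le
      (fun x hx => (hgc x (ne_of_gt (lt_of_lt_of_le hr₁0 hx.1))).continuousWithinAt)
    obtain ⟨x, hx, hx0⟩ := hsub ⟨hgr₁.le, hgr₂.le⟩
    exact ⟨x, hx, hx0⟩
  have hr₁rm : r₁ < rm :=
    lt_of_le_of_ne hrm_mem.1 (fun h => absurd (h ▸ hgrm) (ne_of_lt hgr₁))
  have hrmr₂ : rm < r₂ :=
    lt_of_le_of_ne hrm_mem.2 (fun h => absurd (h ▸ hgrm) (ne_of_gt hgr₂))
  have hrm0 : 0 < rm := lt_trans hr₁0 hr₁rm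
  obtain ⟨rp, hrp_mem, hgrp⟩ : ∃ x ∈ Set.Icc r₂ T, gfun Λ M Q x = 0 := by
    have hsub := intermediate_value_Icc' hTr₂.le
      (fun x hx => (hgc x (ne_of_gt (lt_of_lt_of_le hr₂0 hx.1))).continuousWithinAt)
    obtain ⟨x, hx, hx0⟩ := hsub ⟨hgT.le, hgr₂.le⟩
    exact ⟨x, hx, hx0⟩
  have hr₂rp : r₂ < rp :=
    lt_of_le_of_ne hrp_mem.1 (fun h => absurd (h ▸ hgrp) (ne_of_gt hgr₂))
  have hrp0 : 0 < rp := lt_trans hr₂0 hr₂rp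
  -- mu vanishes at the roots
  have hmuri : mu Λ M Q ri = 0 := by rw [gval ri hri0, hgri, mul_zero]
  have hmurm : mu Λ M Q rm = 0 := by rw [gval rm hrm0, hgrm, mul_zero]
  have hmurp : mu Λ M Q rp = 0 := by rw [gval rp hrp0, hgrp, mul_zero]
  -- nonvanishing derivative at simple roots
  have hderiv_ne : ∀ x : ℝ, 0 < x → mu Λ M Q x = 0 →
      x ^ 2 - 3 * M * x + 2 * Q ^ 2 ≠ 0 → deriv (mu Λ M Q) x ≠ 0 := by
    intro x hx hmux hqx
    have hxne : x ≠ 0 := ne_of_gt hx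
    rw [(mu_hasDerivAt Λ M Q x hxne).deriv]
    have hroot : Λ * x ^ 4 = 3 * x ^ 2 - 6 * M * x + 3 * Q ^ 2 := by
      have h := mu_eq_div Λ M Q x hxne
      rw [hmux] at h
      have hF : 3 * x ^ 2 - 6 * M * x - Λ * x ^ 4 + 3 * Q ^ 2 = 0 := by
        rcases div_eq_zero_iff.mp h.symm with h' | h'
        · exact h'
        · exact absurd h' (by positivity)
      linarith
    intro h0
    apply hqx
    have key : (2*M/x^2 - 2*Λ*x/3 - 2*Q^2/x^3) * (3 * x ^ 3 / 2)
        = 3 * M * x - Λ * x ^ 4 - 3 * Q ^ 2 := by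
      field_simp
    rw [h0, zero_mul] at key
    linarith [key, hroot]
  have hd_ri : deriv (mu Λ M Q) ri ≠ 0 := by
    apply hderiv_ne ri hri0 hmuri
    apply ne_of_gt
    nlinarith only [hquad ri, mul_pos (show (0:ℝ) < r₁ - ri by linarith [hrir₁])
      (show (0:ℝ) < r₂ - ri by linarith [hrir₁, h12])]
  have hd_rm : deriv (mu Λ M Q) rm ≠ 0 := by
    apply hderiv_ne rm hrm0 hmurm
    apply ne_of_lt
    nlinarith only [hquad rm, mul_pos (show (0:ℝ) < rm - r₁ by linarith [hr₁rm])
      (show (0:ℝ) < r₂ - rm by linarith [hrmr₂])]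
  have hd_rp : deriv (mu Λ M Q) rp ≠ 0 := by
    apply hderiv_ne rp hrp0 hmurp
    apply ne_of_gt
    nlinarith only [hquad rp, mul_pos (show (0:ℝ) < rp - r₁ by linarith [h12, hr₂rp])
      (show (0:ℝ) < rp - r₂ by linarith [hr₂rp])]
  -- uniqueness
  have huniq : ∀ r : ℝ, 0 < r → mu Λ M Q r = 0 → r = ri ∨ r = rm ∨ r = rp := by
    intro r hr hmur
    have hgr : gfun Λ M Q r = 0 := by
      have h := gval r hr
      rw [hmur] at h
      rcases mul_eq_zero.mp h.symm with h' | h'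
      · exact absurd h' (by positivity)
      · exact h'
    rcases le_or_gt r r₁ with h | h
    · left
      exact hanti1.injOn ⟨hr, h⟩ ⟨hri0, hrir₁.le⟩ (by rw [hgr, hgri])
    · rcases le_or_gt r r₂ with h' | h'
      · right; left
        exact hmono.injOn ⟨h.le, h'⟩ ⟨hr₁rm.le, hrmr₂.le⟩ (by rw [hgr, hgrm])
      · right; right
        exact hanti2.injOn (Set.mem_Ici.mpr h'.le) (Set.mem_Ici.mpr hr₂rp.le)
          (by rw [hgr, hgrp])
  -- signs
  have hsign1 : ∀ r : ℝ, 0 < r ∧ r < ri → 0 < mu Λ M Q r := by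
    intro r ⟨hr0, hrlt⟩
    have hg : gfun Λ M Q ri < gfun Λ M Q r :=
      hanti1 ⟨hr0, by linarith⟩ ⟨hri0, hrir₁.le⟩ hrlt
    rw [hgri] at hg
    rw [gval r hr0]
    exact mul_pos (pow_pos hr0 2) hg
  have hsign2 : ∀ r : ℝ, ri < r ∧ r < rm → mu Λ M Q r < 0 := by
    intro r ⟨hrl, hru⟩
    have hr0 : 0 < r := lt_trans hri0 hrl
    have hg : gfun Λ M Q r < 0 := by
      rcases le_or_gt r r₁ with h | h
      · have := hanti1 ⟨hri0, hrir₁.le⟩ ⟨hr0, h⟩ hrl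
        rw [hgri] at this; exact this
      · have := hmono ⟨h.le, by linarith⟩ ⟨hr₁rm.le, hrmr₂.le⟩ hru
        rw [hgrm] at this; exact this
    rw [gval r hr0]
    exact mul_neg_of_pos_of_neg (pow_pos hr0 2) hg
  have hsign3 : ∀ r : ℝ, rm < r ∧ r < rp → 0 < mu Λ M Q r := by
    intro r ⟨hrl, hru⟩
    have hr0 : 0 < r := lt_trans hrm0 hrl
    have hg : 0 < gfun Λ M Q r := by
      rcases le_or_gt r r₂ with h | h
      · have := hmono ⟨hr₁rm.le, hrmr₂.le⟩ ⟨by linarith, h⟩ hrl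
        rw [hgrm] at this; exact this
      · have := hanti2 (Set.mem_Ici.mpr h.le) (Set.mem_Ici.mpr hr₂rp.le) hru
        rw [hgrp] at this; exact this
    rw [gval r hr0]
    exact mul_pos (pow_pos hr0 2) hg
  have hsign4 : ∀ r : ℝ, rp < r → mu Λ M Q r < 0 := by
    intro r hrl
    have hr0 : 0 < r := lt_trans hrp0 hrl
    have hg : gfun Λ M Q r < 0 := by
      have := hanti2 (Set.mem_Ici.mpr hr₂rp.le) (Set.mem_Ici.mpr (by linarith : r₂ ≤ r)) hrl
      rw [hgrp] at this; exact this
    rw [gval r hr0]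
    exact mul_neg_of_pos_of_neg (pow_pos hr0 2) hg
  exact ⟨ri, rm, rp, hri0, hrir₁, hr₁rm, hrmr₂, hr₂rp, hmuri, hmurm, hmurp,
    hd_ri, hd_rm, hd_rp, huniq, hsign1, hsign2, hsign3, hsign4⟩
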